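/- For all n ≥ 3, the number of permutations in S_n that avoid the patterns 1243, 2143 and 231 equals (n+2)·2^{n−3}; equivalently, for n ≥ 2 this number equals 2^{n−1} + (n−2)·2^{n−3} (interpreting the second term as 0 when n = 2). -/

import Mathlib

/-- `π` contains the pattern `τ`: there is a strictly increasing choice of positions
whose values appear in the same relative order as `τ`. -/
def Contains {n k : ℕ} (π : Equiv.Perm (Fin n)) (τ : Equiv.Perm (Fin k)) : Prop :=
  ∃ f : Fin k → Fin n, StrictMono f ∧ ∀ a b : Fin k, τ a < τ b ↔ π (f a) < π (f b)

/-- `π` avoids the pattern `τ`. -/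
def Avoids {n k : ℕ} (π : Equiv.Perm (Fin n)) (τ : Equiv.Perm (Fin k)) : Prop :=
  ¬ Contains π τ

/-- The pattern 1243 (in one-line notation), as a permutation of `Fin 4` (0-based). -/
def pat1243 : Equiv.Perm (Fin 4) := Equiv.swap 2 3

/-- The pattern 2143 (in one-line notation), as a permutation of `Fin 4` (0-based). -/
def pat2143 : Equiv.Perm (Fin 4) := Equiv.swap 0 1 * Equiv.swap 2 3

/-- A Schröder permutation avoids both 1243 and 2143. -/
def Schroeder {n : ℕ} (π : Equiv.Perm (Fin n)) : Prop :=
  Avoids π pat1243 ∧ Avoids π pat2143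

/-- The diagram of `π` (0-based coordinates): squares `(i,j)` with `π i > j` and
`π⁻¹ j > i`. -/
def Diagram {n : ℕ} (π : Equiv.Perm (Fin n)) : Set (Fin n × Fin n) :=
  {p | p.2 < π p.1 ∧ p.1 < π.symm p.2}

/-- The essential set of `π`: squares of the diagram whose east and south neighbours
are not in the diagram. -/
def EssSet {n : ℕ} (π : Equiv.Perm (Fin n)) : Set (Fin n × Fin n) :=
  {p | p ∈ Diagram π ∧
    (∀ i' : Fin n, (i' : ℕ) = (p.1 : ℕ) + 1 → (i', p.2) ∉ Diagram π) ∧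
    (∀ j' : Fin n, (j' : ℕ) = (p.2 : ℕ) + 1 → (p.1, j') ∉ Diagram π)}

/-- The rank of a square `(i,j)`: the number of positions `k < i` with `π k < j`. -/
def rank {n : ℕ} (π : Equiv.Perm (Fin n)) (p : Fin n × Fin n) : ℕ :=
  (Finset.univ.filter fun k : Fin n => k < p.1 ∧ π k < p.2).card

/-- The pattern 231 (0-based one-line notation `1 2 0`), as the rotation of `Fin 3`. -/
def pat231 : Equiv.Perm (Fin 3) := finRotate 3

namespace AvoidAux
open List

def has231 (w : List ℕ) : Prop := ∃ a b c : ℕ, [a,b,c] <+ w ∧ c < a ∧ a < b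
def has132 (w : List ℕ) : Prop := ∃ a b c : ℕ, [a,b,c] <+ w ∧ a < c ∧ c < b
def has1243 (w : List ℕ) : Prop := ∃ a b c d : ℕ, [a,b,c,d] <+ w ∧ a < b ∧ b < d ∧ d < c
def has2143 (w : List ℕ) : Prop := ∃ a b c d : ℕ, [a,b,c,d] <+ w ∧ b < a ∧ a < d ∧ d < c

def ValidA (w : List ℕ) : Prop := ¬ has1243 w ∧ ¬ has2143 w ∧ ¬ has231 w
def ValidB (w : List ℕ) : Prop := ¬ has132 w ∧ ¬ has231 w

def SetA (n : ℕ) : Set (List ℕ) := {w | w.Perm (List.range n) ∧ ValidA w}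
def SetB (n : ℕ) : Set (List ℕ) := {w | w.Perm (List.range n) ∧ ValidB w}

lemma has231_sublist {u w : List ℕ} (h : u <+ w) : has231 u → has231 w := by
  rintro ⟨a,b,c,hs,h1,h2⟩; exact ⟨a,b,c,hs.trans h,h1,h2⟩
lemma has132_sublist {u w : List ℕ} (h : u <+ w) : has132 u → has132 w := by
  rintro ⟨a,b,c,hs,h1,h2⟩; exact ⟨a,b,c,hs.trans h,h1,h2⟩
lemma has1243_sublist {u w : List ℕ} (h : u <+ w) : has1243 u → has1243 w := by
  rintro ⟨a,b,c,d,hs,h1,h2,h3⟩; exact ⟨a,b,c,d,hs.trans h,h1,h2,h3⟩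
lemma has2143_sublist {u w : List ℕ} (h : u <+ w) : has2143 u → has2143 w := by
  rintro ⟨a,b,c,d,hs,h1,h2,h3⟩; exact ⟨a,b,c,d,hs.trans h,h1,h2,h3⟩

lemma sublist_concat_iff {s w : List ℕ} {M : ℕ} :
    s <+ w ++ [M] ↔ s <+ w ∨ ∃ t, t <+ w ∧ s = t ++ [M] := by
  rw [List.sublist_append_iff]
  constructor
  · rintro ⟨s1, s2, rfl, h1, h2⟩
    rcases List.sublist_singleton.mp h2 with rfl | rfl
    · exact Or.inl (by simpa using h1)
    · exact Or.inr ⟨s1, h1, rfl⟩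
  · rintro (h | ⟨t, ht, rfl⟩)
    · exact ⟨s, [], by simp, h, by simp⟩
    · exact ⟨t, [M], rfl, ht, Sublist.refl _⟩

-- appending a new maximum at the end
lemma has1243_concat {w : List ℕ} {M : ℕ} (hM : ∀ x ∈ w, x < M) :
    has1243 (w ++ [M]) ↔ has1243 w := by
  constructor
  · rintro ⟨a,b,c,d,hs,h1,h2,h3⟩
    rcases sublist_concat_iff.mp hs with h | ⟨t, ht, hEq⟩
    · exact ⟨a,b,c,d,h,h1,h2,h3⟩
    · have : t = [a,b,c] ∧ d = M := by
        have h5 : [a,b,c] ++ [d] = t ++ [M] := by simpa using hEq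
        have := List.append_inj' h5 rfl
        simp at this
        exact ⟨this.1.symm, this.2⟩
      obtain ⟨rfl, rfl⟩ := this
      have hc : c ∈ w := (List.Sublist.subset ht) (by simp)
      exact absurd (hM c hc) (by omega)
  · intro h; exact has1243_sublist (List.sublist_append_left w [M]) h



lemma has2143_concat {w : List ℕ} {M : ℕ} (hM : ∀ x ∈ w, x < M) :
    has2143 (w ++ [M]) ↔ has2143 w := by
  constructor
  · rintro ⟨a,b,c,d,hs,h1,h2,h3⟩
    rcases sublist_concat_iff.mp hs with h | ⟨t, ht, hEq⟩
    · exact ⟨a,b,c,d,h,h1,h2,h3⟩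
    · have h5 : [a,b,c] ++ [d] = t ++ [M] := by simpa using hEq
      have h6 := List.append_inj' h5 rfl
      simp at h6
      obtain ⟨h6a, rfl⟩ := h6
      have hc : c ∈ w := (List.Sublist.subset ht) (by rw [← h6a]; simp)
      exact absurd (hM c hc) (by omega)
  · intro h; exact has2143_sublist (List.sublist_append_left w [M]) h

lemma has231_concat {w : List ℕ} {M : ℕ} (hM : ∀ x ∈ w, x < M) :
    has231 (w ++ [M]) ↔ has231 w := by
  constructor
  · rintro ⟨a,b,c,hs,h1,h2⟩
    rcases sublist_concat_iff.mp hs with h | ⟨t, ht, hEq⟩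
    · exact ⟨a,b,c,h,h1,h2⟩
    · have h5 : [a,b] ++ [c] = t ++ [M] := by simpa using hEq
      have h6 := List.append_inj' h5 rfl
      simp at h6
      obtain ⟨h6a, rfl⟩ := h6
      have ha : a ∈ w := (List.Sublist.subset ht) (by rw [← h6a]; simp)
      exact absurd (hM a ha) (by omega)
  · intro h; exact has231_sublist (List.sublist_append_left w [M]) h

lemma has132_concat {w : List ℕ} {M : ℕ} (hM : ∀ x ∈ w, x < M) :
    has132 (w ++ [M]) ↔ has132 w := by
  constructor
  · rintro ⟨a,b,c,hs,h1,h2⟩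
    rcases sublist_concat_iff.mp hs with h | ⟨t, ht, hEq⟩
    · exact ⟨a,b,c,h,h1,h2⟩
    · have h5 : [a,b] ++ [c] = t ++ [M] := by simpa using hEq
      have h6 := List.append_inj' h5 rfl
      simp at h6
      obtain ⟨h6a, rfl⟩ := h6
      have hb : b ∈ w := (List.Sublist.subset ht) (by rw [← h6a]; simp)
      exact absurd (hM b hb) (by omega)
  · intro h; exact has132_sublist (List.sublist_append_left w [M]) h

lemma has1243_cons {w : List ℕ} {M : ℕ} (hM : ∀ x ∈ w, x < M) :
    has1243 (M :: w) ↔ has1243 w := by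
  constructor
  · rintro ⟨a,b,c,d,hs,h1,h2,h3⟩
    rcases List.sublist_cons_iff.mp hs with h | ⟨r, hEq, hr⟩
    · exact ⟨a,b,c,d,h,h1,h2,h3⟩
    · obtain ⟨rfl, rfl⟩ : a = M ∧ [b,c,d] = r := by
        cases hEq; exact ⟨rfl, rfl⟩
      have hb : b ∈ w := (List.Sublist.subset hr) (by simp)
      exact absurd (hM b hb) (by omega)
  · intro h; exact has1243_sublist (List.sublist_cons_self M w) h

lemma has2143_cons {w : List ℕ} {M : ℕ} (hM : ∀ x ∈ w, x < M) :
    has2143 (M :: w) ↔ has2143 w := by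
  constructor
  · rintro ⟨a,b,c,d,hs,h1,h2,h3⟩
    rcases List.sublist_cons_iff.mp hs with h | ⟨r, hEq, hr⟩
    · exact ⟨a,b,c,d,h,h1,h2,h3⟩
    · obtain ⟨rfl, rfl⟩ : a = M ∧ [b,c,d] = r := by
        cases hEq; exact ⟨rfl, rfl⟩
      have hd : d ∈ w := (List.Sublist.subset hr) (by simp)
      exact absurd (hM d hd) (by omega)
  · intro h; exact has2143_sublist (List.sublist_cons_self M w) h

lemma has231_cons {w : List ℕ} {M : ℕ} (hM : ∀ x ∈ w, x < M) :
    has231 (M :: w) ↔ has231 w := by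
  constructor
  · rintro ⟨a,b,c,hs,h1,h2⟩
    rcases List.sublist_cons_iff.mp hs with h | ⟨r, hEq, hr⟩
    · exact ⟨a,b,c,h,h1,h2⟩
    · obtain ⟨rfl, rfl⟩ : a = M ∧ [b,c] = r := by
        cases hEq; exact ⟨rfl, rfl⟩
      have hb : b ∈ w := (List.Sublist.subset hr) (by simp)
      exact absurd (hM b hb) (by omega)
  · intro h; exact has231_sublist (List.sublist_cons_self M w) h

lemma has132_cons {w : List ℕ} {M : ℕ} (hM : ∀ x ∈ w, x < M) :
    has132 (M :: w) ↔ has132 w := by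
  constructor
  · rintro ⟨a,b,c,hs,h1,h2⟩
    rcases List.sublist_cons_iff.mp hs with h | ⟨r, hEq, hr⟩
    · exact ⟨a,b,c,h,h1,h2⟩
    · obtain ⟨rfl, rfl⟩ : a = M ∧ [b,c] = r := by
        cases hEq; exact ⟨rfl, rfl⟩
      have hc : c ∈ w := (List.Sublist.subset hr) (by simp)
      exact absurd (hM c hc) (by omega)
  · intro h; exact has132_sublist (List.sublist_cons_self M w) h

lemma has1243_to_has132 {w : List ℕ} : has1243 w → has132 w := by
  rintro ⟨a,b,c,d,hs,h1,h2,h3⟩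
  exact ⟨b,c,d, (List.sublist_cons_self a [b,c,d]).trans hs, h2, h3⟩

lemma has2143_to_has132 {w : List ℕ} : has2143 w → has132 w := by
  rintro ⟨a,b,c,d,hs,h1,h2,h3⟩
  refine ⟨a,c,d, ?_, h2, h3⟩
  exact (List.Sublist.cons₂ a ((List.sublist_cons_self b [c,d]))).trans hs

-- the three case-S lemmas, for w = 0 :: M :: B
lemma has231_S {B : List ℕ} {M : ℕ} (hB : ∀ x ∈ B, 0 < x ∧ x < M) :
    has231 (0 :: M :: B) ↔ has231 B := by
  constructor
  · rintro ⟨a,b,c,hs,h1,h2⟩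
    rcases List.sublist_cons_iff.mp hs with h | ⟨r, hEq, hr⟩
    · rcases List.sublist_cons_iff.mp h with h' | ⟨r', hEq', hr'⟩
      · exact ⟨a,b,c,h',h1,h2⟩
      · obtain ⟨rfl, rfl⟩ : a = M ∧ [b,c] = r' := by cases hEq'; exact ⟨rfl, rfl⟩
        have hb : b ∈ B := (List.Sublist.subset hr') (by simp)
        exact absurd (hB b hb).2 (by omega)
    · obtain ⟨rfl, rfl⟩ : a = 0 ∧ [b,c] = r := by cases hEq; exact ⟨rfl, rfl⟩
      omega
  · intro h
    exact has231_sublist ((List.sublist_cons_self M B).trans (List.sublist_cons_self 0 _)) h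

lemma has2143_S {B : List ℕ} {M : ℕ} (hB : ∀ x ∈ B, 0 < x ∧ x < M) :
    has2143 (0 :: M :: B) ↔ has2143 B := by
  constructor
  · rintro ⟨a,b,c,d,hs,h1,h2,h3⟩
    rcases List.sublist_cons_iff.mp hs with h | ⟨r, hEq, hr⟩
    · rcases List.sublist_cons_iff.mp h with h' | ⟨r', hEq', hr'⟩
      · exact ⟨a,b,c,d,h',h1,h2,h3⟩
      · obtain ⟨rfl, rfl⟩ : a = M ∧ [b,c,d] = r' := by cases hEq'; exact ⟨rfl, rfl⟩
        have hd : d ∈ B := (List.Sublist.subset hr') (by simp)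
        exact absurd (hB d hd).2 (by omega)
    · obtain ⟨rfl, rfl⟩ : a = 0 ∧ [b,c,d] = r := by cases hEq; exact ⟨rfl, rfl⟩
      omega
  · intro h
    exact has2143_sublist ((List.sublist_cons_self M B).trans (List.sublist_cons_self 0 _)) h

lemma has1243_S {B : List ℕ} {M : ℕ} (hB : ∀ x ∈ B, 0 < x ∧ x < M) :
    has1243 (0 :: M :: B) ↔ (has132 B ∨ has1243 B) := by
  constructor
  · rintro ⟨a,b,c,d,hs,h1,h2,h3⟩
    rcases List.sublist_cons_iff.mp hs with h | ⟨r, hEq, hr⟩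
    · rcases List.sublist_cons_iff.mp h with h' | ⟨r', hEq', hr'⟩
      · exact Or.inr ⟨a,b,c,d,h',h1,h2,h3⟩
      · obtain ⟨rfl, rfl⟩ : a = M ∧ [b,c,d] = r' := by cases hEq'; exact ⟨rfl, rfl⟩
        have hb : b ∈ B := (List.Sublist.subset hr') (by simp)
        exact absurd (hB b hb).2 (by omega)
    · obtain ⟨rfl, rfl⟩ : a = 0 ∧ [b,c,d] = r := by cases hEq; exact ⟨rfl, rfl⟩
      rcases List.sublist_cons_iff.mp hr with h' | ⟨r', hEq', hr'⟩
      · exact Or.inl ⟨b,c,d,h',h2,h3⟩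
      · obtain ⟨rfl, rfl⟩ : b = M ∧ [c,d] = r' := by cases hEq'; exact ⟨rfl, rfl⟩
        have hd : d ∈ B := (List.Sublist.subset hr') (by simp)
        exact absurd (hB d hd).2 (by omega)
  · rintro (⟨x,y,z,hs,h1,h2⟩ | h)
    · refine ⟨0, x, y, z, ?_, (hB x ((List.Sublist.subset hs) (by simp))).1, h1, h2⟩
      exact List.Sublist.cons₂ 0 (hs.trans (List.sublist_cons_self M B))
    · exact has1243_sublist ((List.sublist_cons_self M B).trans (List.sublist_cons_self 0 _)) h

lemma has132_map {C : List ℕ} : has132 (List.map (· + 1) C) ↔ has132 C := by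
  constructor
  · rintro ⟨a,b,c,hs,h1,h2⟩
    obtain ⟨t, ht, hEq⟩ := List.sublist_map_iff.mp hs
    match t, hEq with
    | [x,y,z], hEq =>
      simp at hEq
      obtain ⟨rfl, rfl, rfl⟩ := hEq
      exact ⟨x,y,z,ht, by omega, by omega⟩
  · rintro ⟨a,b,c,hs,h1,h2⟩
    exact ⟨a+1,b+1,c+1, by simpa using hs.map (· + 1), by omega, by omega⟩

lemma has231_map {C : List ℕ} : has231 (List.map (· + 1) C) ↔ has231 C := by
  constructor
  · rintro ⟨a,b,c,hs,h1,h2⟩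
    obtain ⟨t, ht, hEq⟩ := List.sublist_map_iff.mp hs
    match t, hEq with
    | [x,y,z], hEq =>
      simp at hEq
      obtain ⟨rfl, rfl, rfl⟩ := hEq
      exact ⟨x,y,z,ht, by omega, by omega⟩
  · rintro ⟨a,b,c,hs,h1,h2⟩
    exact ⟨a+1,b+1,c+1, by simpa using hs.map (· + 1), by omega, by omega⟩



lemma perm_range_iff {l : List ℕ} {k : ℕ} :
    l.Perm (List.range k) ↔ l.Nodup ∧ l.length = k ∧ ∀ x ∈ l, x < k := by
  constructor
  · intro h
    exact ⟨h.symm.nodup List.nodup_range, h.length_eq.trans List.length_range,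
      fun x hx => List.mem_range.mp (h.subset hx)⟩
  · rintro ⟨h1, h2, h3⟩
    refine (List.subperm_of_subset h1 fun x hx => List.mem_range.mpr (h3 x hx)).perm_of_length_le ?_
    simp [h2]

lemma setA_finite (n : ℕ) : (SetA n).Finite := by
  refine ((List.range n).permutations.toFinset.finite_toSet).subset fun w hw => ?_
  simp only [Finset.coe_sort_coe, List.coe_toFinset, Set.mem_setOf_eq, List.mem_permutations]
  exact hw.1

lemma setB_finite (n : ℕ) : (SetB n).Finite := by
  refine ((List.range n).permutations.toFinset.finite_toSet).subset fun w hw => ?_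
  simp only [Finset.coe_sort_coe, List.coe_toFinset, Set.mem_setOf_eq, List.mem_permutations]
  exact hw.1

lemma mem_of_getLast?' {l : List ℕ} {a : ℕ} (h : l.getLast? = some a) : a ∈ l := by
  obtain ⟨hne, h2⟩ := List.mem_getLast?_eq_getLast (Option.mem_def.mpr h)
  exact h2 ▸ List.getLast_mem hne

lemma split_bounds {w A B' : List ℕ} {k : ℕ} (hw : w.Perm (List.range (k+1)))
    (hsplit : w = A ++ k :: B') :
    (∀ x ∈ A, x < k) ∧ (∀ x ∈ B', x < k) ∧ A.Disjoint B' := by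
  obtain ⟨hnd, hlen, hbd⟩ := perm_range_iff.mp hw
  rw [hsplit] at hnd
  obtain ⟨ndA, ndkB, disj⟩ := List.nodup_append.mp hnd
  have hkB : k ∉ B' := (List.nodup_cons.mp ndkB).1
  refine ⟨fun x hx => ?_, fun x hx => ?_, fun {x} hx hx' => ?_⟩
  · have h1 : x < k + 1 := hbd x (by rw [hsplit]; exact List.mem_append_left _ hx)
    have h2 : x ≠ k := fun h => disj x hx k (by simp) h
    omega
  · have h1 : x < k + 1 := hbd x (by rw [hsplit]; exact List.mem_append_right _ (by simp [hx]))
    have h2 : x ≠ k := fun h => hkB (h ▸ hx)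
    omega
  · exact disj x hx x (List.mem_cons_of_mem _ hx') rfl

/-- facts extracted for a member of `SetB m` -/
lemma setB_bounds {m : ℕ} {w : List ℕ} (h : w ∈ SetB m) : ∀ x ∈ w, x < m :=
  (perm_range_iff.mp h.1).2.2

lemma setB_concat {m : ℕ} {w : List ℕ} (h : w ∈ SetB m) : w ++ [m] ∈ SetB (m+1) := by
  obtain ⟨hperm, h132, h231⟩ := h
  have hM := setB_bounds ⟨hperm, h132, h231⟩
  refine ⟨?_, ?_, ?_⟩
  · rw [List.range_succ]; exact hperm.append_right [m]
  · rw [has132_concat hM]; exact h132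
  · rw [has231_concat hM]; exact h231

lemma setB_cons {m : ℕ} {w : List ℕ} (h : w ∈ SetB m) : (m :: w) ∈ SetB (m+1) := by
  obtain ⟨hperm, h132, h231⟩ := h
  have hM := setB_bounds ⟨hperm, h132, h231⟩
  refine ⟨?_, ?_, ?_⟩
  · refine (hperm.cons m).trans ?_
    rw [List.range_succ]
    exact (List.perm_append_singleton m (List.range m)).symm
  · rw [has132_cons hM]; exact h132
  · rw [has231_cons hM]; exact h231



lemma card_setB_succ (m : ℕ) (hm : 1 ≤ m) :
    Nat.card (SetB (m+1)) = 2 * Nat.card (SetB m) := by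
  haveI : Finite (SetB m) := (setB_finite m).to_subtype
  haveI : Finite (SetB (m+1)) := (setB_finite (m+1)).to_subtype
  set g : (SetB m ⊕ SetB m) → SetB (m+1) :=
    Sum.elim (fun w => ⟨w.1 ++ [m], setB_concat w.2⟩)
      (fun w => ⟨m :: w.1, setB_cons w.2⟩) with hg
  have hlen : ∀ w : SetB m, w.1 ≠ [] := by
    rintro ⟨w, hw⟩ h
    have h' : w = [] := h
    have := (perm_range_iff.mp hw.1).2.1
    rw [h'] at this
    simp at this
    omega
  have hinj : Function.Injective g := by
    rintro (⟨w₁, hw₁⟩ | ⟨w₁, hw₁⟩) (⟨w₂, hw₂⟩ | ⟨w₂, hw₂⟩) h <;>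
      simp only [hg, Sum.elim_inl, Sum.elim_inr, Subtype.mk.injEq] at h
    · exact congrArg Sum.inl (Subtype.ext (List.append_cancel_right h))
    · obtain ⟨x, t, rfl⟩ := List.exists_cons_of_ne_nil (hlen ⟨w₁, hw₁⟩)
      simp at h
      have : x < m := setB_bounds hw₁ x (by simp)
      omega
    · obtain ⟨x, t, rfl⟩ := List.exists_cons_of_ne_nil (hlen ⟨w₂, hw₂⟩)
      simp at h
      have : x < m := setB_bounds hw₂ x (by simp)
      omega
    · simp at h
      exact congrArg Sum.inr (Subtype.ext h)
  have hsurj : Function.Surjective g := by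
    rintro ⟨w, hperm, h132, h231⟩
    have hmem : m ∈ w := hperm.mem_iff.mpr (List.mem_range.mpr (by omega))
    obtain ⟨A, B', hsplit⟩ := List.append_of_mem hmem
    obtain ⟨hA, hB, hdisj⟩ := split_bounds hperm hsplit
    have hcase : A = [] ∨ B' = [] := by
      by_contra hcon
      push_neg at hcon
      obtain ⟨a, ha⟩ := List.exists_mem_of_ne_nil A hcon.1
      obtain ⟨b, hb⟩ := List.exists_mem_of_ne_nil B' hcon.2
      have hsub : [a, m, b] <+ w := by
        rw [hsplit]
        exact (List.singleton_sublist.mpr ha).append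
          ((List.singleton_sublist.mpr hb).cons₂ m)
      have hab : a ≠ b := fun h => hdisj ha (h ▸ hb)
      rcases Nat.lt_or_ge a b with h' | h'
      · exact h132 ⟨a, m, b, hsub, h', hB b hb⟩
      · exact h231 ⟨a, m, b, hsub, by omega, hA a ha⟩
    rcases hcase with rfl | rfl
    · -- w = m :: B'
      simp only [List.nil_append] at hsplit
      have hBperm : B'.Perm (List.range m) := by
        obtain ⟨hnd, hlen', hbd⟩ := perm_range_iff.mp hperm
        rw [hsplit] at hnd hlen'
        exact perm_range_iff.mpr ⟨(List.nodup_cons.mp hnd).2, by simpa using hlen', hB⟩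
      have hBsub : B' <+ w := by rw [hsplit]; exact List.sublist_cons_self m B'
      refine ⟨Sum.inr ⟨B', hBperm, fun h => h132 (has132_sublist hBsub h),
        fun h => h231 (has231_sublist hBsub h)⟩, ?_⟩
      simp [hg, hsplit]
    · -- w = A ++ [m]
      have hsplit' : w = A ++ [m] := by simpa using hsplit
      have hAperm : A.Perm (List.range m) := by
        obtain ⟨hnd, hlen', hbd⟩ := perm_range_iff.mp hperm
        rw [hsplit'] at hnd hlen'
        refine perm_range_iff.mpr ⟨(List.nodup_append.mp hnd).1, by simpa using hlen', hA⟩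
      have hAsub : A <+ w := by rw [hsplit']; exact List.sublist_append_left A [m]
      refine ⟨Sum.inl ⟨A, hAperm, fun h => h132 (has132_sublist hAsub h),
        fun h => h231 (has231_sublist hAsub h)⟩, ?_⟩
      simp [hg, hsplit']
  rw [← Nat.card_eq_of_bijective g ⟨hinj, hsurj⟩, Nat.card_sum, two_mul]

lemma card_setB_one : Nat.card (SetB 1) = 1 := by
  have : SetB 1 = {[0]} := by
    ext w
    constructor
    · rintro ⟨hperm, -, -⟩
      have : w.Perm [0] := by simpa [List.range_succ] using hperm
      simpa using List.perm_singleton.mp this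
    · rintro rfl
      refine ⟨by simp [List.range_succ], ?_, ?_⟩
      · rintro ⟨a, b, c, hs, -, -⟩
        exact absurd hs.length_le (by simp)
      · rintro ⟨a, b, c, hs, -, -⟩
        exact absurd hs.length_le (by simp)
  rw [this, Nat.card_coe_set_eq, Set.ncard_singleton]

lemma card_setB (m : ℕ) : Nat.card (SetB (m+1)) = 2 ^ m := by
  induction m with
  | zero => simpa using card_setB_one
  | succ k ih =>
    rw [card_setB_succ (k+1) (by omega), ih, pow_succ]
    ring



lemma setA_bounds {n : ℕ} {w : List ℕ} (h : w ∈ SetA n) : ∀ x ∈ w, x < n :=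
  (perm_range_iff.mp h.1).2.2

lemma setA_concat {n : ℕ} {w : List ℕ} (h : w ∈ SetA n) : w ++ [n] ∈ SetA (n+1) := by
  obtain ⟨hperm, h1, h2, h3⟩ := h
  have hM := setA_bounds ⟨hperm, h1, h2, h3⟩
  exact ⟨by rw [List.range_succ]; exact hperm.append_right [n],
    by rw [has1243_concat hM]; exact h1,
    by rw [has2143_concat hM]; exact h2,
    by rw [has231_concat hM]; exact h3⟩

lemma setA_cons {n : ℕ} {w : List ℕ} (h : w ∈ SetA n) : (n :: w) ∈ SetA (n+1) := by
  obtain ⟨hperm, h1, h2, h3⟩ := h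
  have hM := setA_bounds ⟨hperm, h1, h2, h3⟩
  refine ⟨?_,
    by rw [has1243_cons hM]; exact h1,
    by rw [has2143_cons hM]; exact h2,
    by rw [has231_cons hM]; exact h3⟩
  refine (hperm.cons n).trans ?_
  rw [List.range_succ]
  exact (List.perm_append_singleton n (List.range n)).symm

lemma validA_S {B : List ℕ} {M : ℕ} (hB : ∀ x ∈ B, 0 < x ∧ x < M) :
    ValidA (0 :: M :: B) ↔ ValidB B := by
  constructor
  · rintro ⟨h1, h2, h3⟩
    refine ⟨fun h => h1 ((has1243_S hB).mpr (Or.inl h)), fun h => h3 ((has231_S hB).mpr h)⟩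
  · rintro ⟨h132, h231⟩
    refine ⟨?_, ?_, ?_⟩
    · intro h
      rcases (has1243_S hB).mp h with h' | h'
      · exact h132 h'
      · exact h132 (has1243_to_has132 h')
    · intro h
      exact h132 (has2143_to_has132 ((has2143_S hB).mp h))
    · intro h
      exact h231 ((has231_S hB).mp h)

lemma setA_S {m : ℕ} {C : List ℕ} (h : C ∈ SetB (m+1)) :
    (0 :: (m+2) :: List.map (· + 1) C) ∈ SetA (m+3) := by
  obtain ⟨hperm, h132, h231⟩ := h
  have hbd : ∀ x ∈ C, x < m + 1 := setB_bounds ⟨hperm, h132, h231⟩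
  obtain ⟨hnd, hlen, -⟩ := perm_range_iff.mp hperm
  have hBb : ∀ x ∈ List.map (· + 1) C, 0 < x ∧ x < m + 2 := by
    intro x hx
    obtain ⟨c, hc, rfl⟩ := List.mem_map.mp hx
    exact ⟨by omega, by have := hbd c hc; omega⟩
  constructor
  · refine perm_range_iff.mpr ⟨?_, by simp [hlen], ?_⟩
    · refine List.nodup_cons.mpr ⟨?_, List.nodup_cons.mpr ⟨?_, ?_⟩⟩
      · intro h
        rcases List.mem_cons.mp h with h' | h'
        · omega
        · exact absurd (hBb 0 h').1 (by omega)
      · intro h'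
        exact absurd (hBb (m+2) h').2 (by omega)
      · exact hnd.map_on (fun x _ y _ h => by omega)
    · intro x hx
      rcases List.mem_cons.mp hx with rfl | hx
      · omega
      rcases List.mem_cons.mp hx with rfl | hx
      · omega
      · have := (hBb x hx).2; omega
  · exact (validA_S hBb).mpr ⟨fun h => h132 (has132_map.mp h), fun h => h231 (has231_map.mp h)⟩

lemma card_setA_step (m : ℕ) :
    Nat.card (SetA (m+3)) = 2 * Nat.card (SetA (m+2)) + Nat.card (SetB (m+1)) := by
  haveI : Finite (SetA (m+2)) := (setA_finite (m+2)).to_subtype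
  haveI : Finite (SetA (m+3)) := (setA_finite (m+3)).to_subtype
  haveI : Finite (SetB (m+1)) := (setB_finite (m+1)).to_subtype
  set g : ((SetA (m+2) ⊕ SetA (m+2)) ⊕ SetB (m+1)) → SetA (m+3) :=
    Sum.elim
      (Sum.elim (fun w => ⟨w.1 ++ [m+2], setA_concat w.2⟩)
        (fun w => ⟨(m+2) :: w.1, setA_cons w.2⟩))
      (fun C => ⟨0 :: (m+2) :: List.map (· + 1) C.1, setA_S C.2⟩) with hg
  have hAne : ∀ w : SetA (m+2), w.1 ≠ [] := by
    rintro ⟨w, hw⟩ h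
    have h' : w = [] := h
    have := (perm_range_iff.mp hw.1).2.1
    rw [h'] at this
    simp at this
  have hBne : ∀ C : SetB (m+1), C.1 ≠ [] := by
    rintro ⟨w, hw⟩ h
    have h' : w = [] := h
    have := (perm_range_iff.mp hw.1).2.1
    rw [h'] at this
    simp at this
  -- last element of the S-case list is small
  have hlastS : ∀ C : List ℕ, C ∈ SetB (m+1) →
      ∃ y, (0 :: (m+2) :: List.map (· + 1) C).getLast? = some y ∧ y < m + 2 := by
    intro C hC
    have hne : C ≠ [] := by
      intro h
      have := (perm_range_iff.mp hC.1).2.1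
      rw [h] at this; simp at this
    have hne' : List.map (· + 1) C ≠ [] := by simpa using hne
    obtain ⟨z, t, hzt⟩ := List.exists_cons_of_ne_nil hne'
    rw [hzt, List.getLast?_cons_cons, List.getLast?_cons_cons,
      List.getLast?_eq_getLast_of_ne_nil (List.cons_ne_nil z t)]
    refine ⟨_, rfl, ?_⟩
    have hmem : (z :: t).getLast (List.cons_ne_nil z t) ∈ List.map (· + 1) C := by
      rw [hzt]; exact List.getLast_mem _
    obtain ⟨c, hc, hce⟩ := List.mem_map.mp hmem
    have := setB_bounds hC c hc
    omega
  have hinj : Function.Injective g := by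
    rintro (⟨⟨w₁, hw₁⟩ | ⟨w₁, hw₁⟩⟩ | ⟨C₁, hC₁⟩) (⟨⟨w₂, hw₂⟩ | ⟨w₂, hw₂⟩⟩ | ⟨C₂, hC₂⟩) h <;>
      simp only [hg, Sum.elim_inl, Sum.elim_inr, Subtype.mk.injEq] at h
    · exact congrArg (Sum.inl ∘ Sum.inl) (Subtype.ext (List.append_cancel_right h))
    · obtain ⟨x, t, rfl⟩ := List.exists_cons_of_ne_nil (hAne ⟨w₁, hw₁⟩)
      simp at h
      have : x < m + 2 := setA_bounds hw₁ x (by simp)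
      omega
    · -- w₁ ++ [m+2] = 0 :: (m+2) :: map : compare getLast?
      obtain ⟨y, hy, hylt⟩ := hlastS C₂ hC₂
      have := List.getLast?_concat (a := m+2) (l := w₁)
      rw [h, hy] at this
      simp at this
      omega
    · obtain ⟨x, t, rfl⟩ := List.exists_cons_of_ne_nil (hAne ⟨w₂, hw₂⟩)
      simp at h
      have : x < m + 2 := setA_bounds hw₂ x (by simp)
      omega
    · simp at h
      exact congrArg (Sum.inl ∘ Sum.inr) (Subtype.ext h)
    · exfalso
      have h0 : m + 2 = 0 := by
        have := congrArg List.head? h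
        simpa using this
      omega
    · obtain ⟨y, hy, hylt⟩ := hlastS C₁ hC₁
      have := List.getLast?_concat (a := m+2) (l := w₂)
      rw [← h, hy] at this
      simp at this
      omega
    · exfalso
      have h0 : m + 2 = 0 := by
        have := congrArg List.head? h
        simpa using this
      omega
    · have h' : List.map (· + 1) C₁ = List.map (· + 1) C₂ := by
        simpa using h
      have hCC : C₁ = C₂ := List.map_injective_iff.mpr (fun a b hab => by omega) h'
      exact congrArg Sum.inr (Subtype.ext hCC)
  have hsurj : Function.Surjective g := by
    rintro ⟨w, hperm, h1243, h2143, h231⟩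
    have hvv : ValidA w := ⟨h1243, h2143, h231⟩
    have hmem : (m+2) ∈ w := hperm.mem_iff.mpr (List.mem_range.mpr (by omega))
    obtain ⟨A, B', hsplit⟩ := List.append_of_mem hmem
    obtain ⟨hA, hB, hdisj⟩ := split_bounds hperm hsplit
    have hAlt : ∀ a ∈ A, ∀ b ∈ B', a < b := by
      intro a ha b hb
      have hab : a ≠ b := fun h => hdisj ha (h ▸ hb)
      by_contra hcon
      have hba : b < a := by omega
      have hsub : [a, m+2, b] <+ w := by
        rw [hsplit]
        exact (List.singleton_sublist.mpr ha).append
          ((List.singleton_sublist.mpr hb).cons₂ (m+2))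
      exact h231 ⟨a, m+2, b, hsub, hba, hA a ha⟩
    by_cases hBe : B' = []
    · -- w = A ++ [m+2]
      subst hBe
      have hsplit' : w = A ++ [m+2] := by simpa using hsplit
      have hAperm : A.Perm (List.range (m+2)) := by
        obtain ⟨hnd, hlen', -⟩ := perm_range_iff.mp hperm
        rw [hsplit'] at hnd hlen'
        exact perm_range_iff.mpr ⟨(List.nodup_append.mp hnd).1, by simpa using hlen', hA⟩
      have hAsub : A <+ w := by rw [hsplit']; exact List.sublist_append_left A [m+2]
      refine ⟨Sum.inl (Sum.inl ⟨A, hAperm, fun h => h1243 (has1243_sublist hAsub h),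
        fun h => h2143 (has2143_sublist hAsub h), fun h => h231 (has231_sublist hAsub h)⟩), ?_⟩
      simp [hg, hsplit']
    by_cases hAe : A = []
    · -- w = (m+2) :: B'
      subst hAe
      simp only [List.nil_append] at hsplit
      have hBperm : B'.Perm (List.range (m+2)) := by
        obtain ⟨hnd, hlen', -⟩ := perm_range_iff.mp hperm
        rw [hsplit] at hnd hlen'
        exact perm_range_iff.mpr ⟨(List.nodup_cons.mp hnd).2, by simpa using hlen', hB⟩
      have hBsub : B' <+ w := by rw [hsplit]; exact List.sublist_cons_self (m+2) B'
      refine ⟨Sum.inl (Sum.inr ⟨B', hBperm, fun h => h1243 (has1243_sublist hBsub h),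
        fun h => h2143 (has2143_sublist hBsub h), fun h => h231 (has231_sublist hBsub h)⟩), ?_⟩
      simp [hg, hsplit]
    · -- middle case : A = [0]
      obtain ⟨b, hb⟩ := List.exists_mem_of_ne_nil B' hBe
      obtain ⟨x, A', rfl⟩ := List.exists_cons_of_ne_nil hAe
      have hA'e : A' = [] := by
        by_contra hA'ne
        obtain ⟨y, hy⟩ := List.exists_mem_of_ne_nil A' hA'ne
        have hsub : [x, y, m+2, b] <+ w := by
          rw [hsplit]
          have h1 : [x, y] <+ x :: A' := (List.singleton_sublist.mpr hy).cons₂ x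
          exact h1.append ((List.singleton_sublist.mpr hb).cons₂ (m+2))
        have hxy : x ≠ y := by
          obtain ⟨hnd, -, -⟩ := perm_range_iff.mp hperm
          rw [hsplit] at hnd
          have := (List.nodup_append.mp hnd).1
          intro h
          exact (List.nodup_cons.mp this).1 (h ▸ hy)
        have hxb : x < b := hAlt x (by simp) b hb
        have hyb : y < b := hAlt y (by simp [hy]) b hb
        have hbM : b < m + 2 := hB b hb
        rcases Nat.lt_or_ge x y with h' | h'
        · exact h1243 ⟨x, y, m+2, b, hsub, h', hyb, hbM⟩
        · exact h2143 ⟨x, y, m+2, b, hsub, by omega, hxb, hbM⟩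
      subst hA'e
      have hx0 : x = 0 := by
        have h0mem : 0 ∈ w := hperm.mem_iff.mpr (List.mem_range.mpr (by omega))
        rw [hsplit] at h0mem
        rcases List.mem_append.mp h0mem with h' | h'
        · have := h'; simp at this; omega
        · rcases List.mem_cons.mp h' with h'' | h''
          · omega
          · have := hAlt x (by simp) 0 h''
            omega
      subst hx0
      have hsplit' : w = 0 :: (m+2) :: B' := by simpa using hsplit
      have hBb : ∀ y ∈ B', 0 < y ∧ y < m + 2 := by
        intro y hy
        exact ⟨hAlt 0 (by simp) y hy, hB y hy⟩
      set C : List ℕ := List.map (· - 1) B' with hCdef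
      have hBC : B' = List.map (· + 1) C := by
        rw [hCdef, List.map_map]
        conv_lhs => rw [← List.map_id B']
        refine List.map_congr_left fun y hy => ?_
        have := (hBb y hy).1
        simp only [Function.comp_apply, id_eq]
        omega
      have hvB : ValidB B' := (validA_S hBb).mp (hsplit' ▸ hvv)
      have hCperm : C.Perm (List.range (m+1)) := by
        obtain ⟨hnd, hlen', -⟩ := perm_range_iff.mp hperm
        rw [hsplit'] at hnd hlen'
        have hndB : B'.Nodup := ((List.nodup_cons.mp (List.nodup_cons.mp hnd).2).2)
        have hlenB : B'.length = m + 1 := by simp at hlen'; omega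
        refine perm_range_iff.mpr ⟨?_, by simp [hCdef, hlenB], ?_⟩
        · exact hndB.map_on (fun a ha b hbb h => by
            have h1 := (hBb a ha).1
            have h2 := (hBb b hbb).1
            omega)
        · intro y hy
          obtain ⟨b', hb', rfl⟩ := List.mem_map.mp hy
          have := (hBb b' hb').2
          omega
      have hvC : ValidB C := by
        rw [hBC] at hvB
        exact ⟨fun h => hvB.1 (has132_map.mpr h), fun h => hvB.2 (has231_map.mpr h)⟩
      refine ⟨Sum.inr ⟨C, hCperm, hvC.1, hvC.2⟩, ?_⟩
      simp only [hg, Sum.elim_inr]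
      exact Subtype.ext (show 0 :: (m+2) :: List.map (· + 1) C = w by rw [hsplit', ← hBC])
  rw [← Nat.card_eq_of_bijective g ⟨hinj, hsurj⟩, Nat.card_sum, Nat.card_sum, two_mul]



lemma card_setA_two : Nat.card (SetA 2) = 2 := by
  have hs : SetA 2 = {[0,1], [1,0]} := by
    ext w
    constructor
    · rintro ⟨hperm, -, -, -⟩
      obtain ⟨hnd, hlen, hbd⟩ := perm_range_iff.mp hperm
      obtain ⟨a, b, rfl⟩ := List.length_eq_two.mp hlen
      have ha : a < 2 := hbd a (by simp)
      have hb : b < 2 := hbd b (by simp)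
      have hab : a ≠ b := by
        intro h
        rw [h] at hnd
        simp at hnd
      interval_cases a <;> interval_cases b <;> simp_all
    · have hval : ∀ u : List ℕ, u.length = 2 → ValidA u := by
        intro u hu
        refine ⟨?_, ?_, ?_⟩
        · rintro ⟨a,b,c,d,hs,-⟩; have := hs.length_le; simp [hu] at this
        · rintro ⟨a,b,c,d,hs,-⟩; have := hs.length_le; simp [hu] at this
        · rintro ⟨a,b,c,hs,-⟩; have := hs.length_le; simp [hu] at this
      rintro (rfl | rfl)
      · exact ⟨by decide, hval _ rfl⟩
      · exact ⟨by decide, hval _ rfl⟩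
  rw [hs, Nat.card_coe_set_eq, Set.ncard_pair (by decide)]

lemma card_setA_formula (k : ℕ) : Nat.card (SetA (k+3)) = (k+5) * 2 ^ k := by
  induction k with
  | zero =>
    rw [card_setA_step 0, card_setA_two, card_setB 0]
    norm_num
  | succ j ih =>
    rw [card_setA_step (j+1), ih, card_setB (j+1), pow_succ]
    ring



lemma ofFn_comp_sublist {n k : ℕ} {f : Fin k → Fin n} (hf : StrictMono f) (g : Fin n → ℕ) :
    List.ofFn (fun j => g (f j)) <+ List.ofFn g := by
  have hlen : (List.ofFn g).length = n := by simp
  have hpw : (List.ofFn (fun j : Fin k => Fin.cast hlen.symm (f j))).Pairwise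
      (fun a b : Fin (List.ofFn g).length => (a : ℕ) < (b : ℕ)) := by
    rw [List.pairwise_ofFn]
    intro i j hij
    simpa using hf hij
  have hsub : List.map (List.ofFn g).get (List.ofFn (fun j : Fin k => Fin.cast hlen.symm (f j))) <+ List.ofFn g :=
    List.map_getElem_sublist hpw
  have heq : List.map (List.ofFn g).get (List.ofFn (fun j : Fin k => Fin.cast hlen.symm (f j)))
      = List.ofFn (fun j => g (f j)) := by
    rw [List.map_ofFn]
    refine congrArg _ (funext fun j => ?_)
    simp only [Function.comp_apply, List.get_ofFn]
    exact congrArg g (Fin.ext rfl)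
  rwa [heq] at hsub

lemma sublist_ofFn_exists {n : ℕ} {s : List ℕ} (g : Fin n → ℕ) (hs : s <+ List.ofFn g) :
    ∃ F : Fin s.length → Fin n, StrictMono F ∧ ∀ j : Fin s.length, g (F j) = s.get j := by
  obtain ⟨f', hf'⟩ := List.sublist_iff_exists_fin_orderEmbedding_get_eq.mp hs
  have hlen : (List.ofFn g).length = n := by simp
  refine ⟨fun j => Fin.cast hlen (f' j), ?_, ?_⟩
  · intro a b hab
    have := f'.strictMono hab
    exact Fin.lt_def.mpr (Fin.lt_def.mp this)
  · intro j
    rw [hf' j, List.get_ofFn]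

set_option maxHeartbeats 1000000 in
lemma contains1243_iff {n : ℕ} (π : Equiv.Perm (Fin n)) :
    Contains π pat1243 ↔ has1243 (List.ofFn fun i => ((π i : ℕ))) := by
  constructor
  · rintro ⟨f, hf, hco⟩
    refine ⟨(π (f 0) : ℕ), (π (f 1) : ℕ), (π (f 2) : ℕ), (π (f 3) : ℕ), ?_, ?_, ?_, ?_⟩
    · exact ofFn_comp_sublist hf (fun i => (π i : ℕ))
    · exact (hco 0 1).mp (by decide)
    · exact (hco 1 3).mp (by decide)
    · exact (hco 3 2).mp (by decide)
  · rintro ⟨a, b, c, d, hs, h1, h2, h3⟩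
    obtain ⟨F, hF, hFv⟩ := sublist_ofFn_exists _ hs
    refine ⟨F, hF, ?_⟩
    intro i j
    have hp : ∀ x : Fin 4, ((pat1243 x : ℕ)) = [0,1,3,2].get x := by decide
    rw [Fin.lt_def, Fin.lt_def, hp i, hp j, hFv i, hFv j]
    fin_cases i <;> fin_cases j <;> simp [List.get] <;> omega
  
set_option maxHeartbeats 1000000 in
lemma contains2143_iff {n : ℕ} (π : Equiv.Perm (Fin n)) :
    Contains π pat2143 ↔ has2143 (List.ofFn fun i => ((π i : ℕ))) := by
  constructor
  · rintro ⟨f, hf, hco⟩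
    refine ⟨(π (f 0) : ℕ), (π (f 1) : ℕ), (π (f 2) : ℕ), (π (f 3) : ℕ), ?_, ?_, ?_, ?_⟩
    · exact ofFn_comp_sublist hf (fun i => (π i : ℕ))
    · exact (hco 1 0).mp (by decide)
    · exact (hco 0 3).mp (by decide)
    · exact (hco 3 2).mp (by decide)
  · rintro ⟨a, b, c, d, hs, h1, h2, h3⟩
    obtain ⟨F, hF, hFv⟩ := sublist_ofFn_exists _ hs
    refine ⟨F, hF, ?_⟩
    intro i j
    have hp : ∀ x : Fin 4, ((pat2143 x : ℕ)) = [1,0,3,2].get x := by decide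
    rw [Fin.lt_def, Fin.lt_def, hp i, hp j, hFv i, hFv j]
    fin_cases i <;> fin_cases j <;> simp [List.get] <;> omega

set_option maxHeartbeats 1000000 in
lemma contains231_iff {n : ℕ} (π : Equiv.Perm (Fin n)) :
    Contains π pat231 ↔ has231 (List.ofFn fun i => ((π i : ℕ))) := by
  constructor
  · rintro ⟨f, hf, hco⟩
    refine ⟨(π (f 0) : ℕ), (π (f 1) : ℕ), (π (f 2) : ℕ), ?_, ?_, ?_⟩
    · exact ofFn_comp_sublist hf (fun i => (π i : ℕ))
    · exact (hco 2 0).mp (by decide)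
    · exact (hco 0 1).mp (by decide)
  · rintro ⟨a, b, c, hs, h1, h2⟩
    obtain ⟨F, hF, hFv⟩ := sublist_ofFn_exists _ hs
    refine ⟨F, hF, ?_⟩
    intro i j
    have hp : ∀ x : Fin 3, ((pat231 x : ℕ)) = [1,2,0].get x := by decide
    rw [Fin.lt_def, Fin.lt_def, hp i, hp j, hFv i, hFv j]
    fin_cases i <;> fin_cases j <;> simp [List.get] <;> omega



lemma card_perm_eq (n : ℕ) :
    Nat.card {π : Equiv.Perm (Fin n) //
        Avoids π pat1243 ∧ Avoids π pat2143 ∧ Avoids π pat231}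
      = Nat.card (SetA n) := by
  have keyperm : ∀ π : Equiv.Perm (Fin n),
      (List.ofFn fun i => ((π i : ℕ))).Perm (List.range n) := by
    intro π
    refine perm_range_iff.mpr ⟨List.nodup_ofFn.mpr ?_, by simp, ?_⟩
    · exact fun a b h => π.injective (Fin.ext h)
    · intro x hx
      obtain ⟨i, hi⟩ := Set.mem_range.mp ((List.mem_ofFn' _ x).mp hx)
      rw [← hi]
      exact (π i).isLt
  refine Nat.card_eq_of_bijective (fun p =>
    ⟨List.ofFn fun i => ((p.1 i : ℕ)), keyperm p.1,
      fun h => p.2.1 ((contains1243_iff p.1).mpr h),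
      fun h => p.2.2.1 ((contains2143_iff p.1).mpr h),
      fun h => p.2.2.2 ((contains231_iff p.1).mpr h)⟩) ⟨?_, ?_⟩
  · rintro ⟨π₁, h₁⟩ ⟨π₂, h₂⟩ h
    have h' : (List.ofFn fun i => ((π₁ i : ℕ))) = List.ofFn fun i => ((π₂ i : ℕ)) :=
      congrArg Subtype.val h
    have h'' := List.ofFn_inj.mp h'
    refine Subtype.ext (Equiv.ext fun i => Fin.ext ?_)
    exact congrFun h'' i
  · rintro ⟨w, hperm, h1, h2, h3⟩
    obtain ⟨hnd, hlen, hbd⟩ := perm_range_iff.mp hperm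
    set f0 : Fin n → Fin n := fun i =>
      ⟨w.get (Fin.cast hlen.symm i), hbd _ (List.get_mem w _)⟩ with hf0
    have hinj : Function.Injective f0 := by
      intro i j h
      have hval : w.get (Fin.cast hlen.symm i) = w.get (Fin.cast hlen.symm j) :=
        congrArg Fin.val h
      have h5 := hnd.get_inj_iff.mp hval
      have h6 := congrArg Fin.val h5
      exact Fin.ext h6
    set π : Equiv.Perm (Fin n) := Equiv.ofBijective f0 (Finite.injective_iff_bijective.mp hinj)
      with hπ
    have hoffn : (List.ofFn fun i => ((π i : ℕ))) = w := by
      refine List.ext_get (by simp [hlen]) fun k hk1 hk2 => ?_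
      rw [List.get_ofFn]
      rfl
    refine ⟨⟨π, fun h => h1 ((contains1243_iff π).mp h |> (hoffn ▸ ·)),
      fun h => h2 ((contains2143_iff π).mp h |> (hoffn ▸ ·)),
      fun h => h3 ((contains231_iff π).mp h |> (hoffn ▸ ·))⟩, ?_⟩
    exact Subtype.ext hoffn

end AvoidAux

/-- For `n ≥ 3`, `|S_n(1243, 2143, 231)| = (n+2)·2^{n-3}`; equivalently, for `n ≥ 2` this
number equals `2^{n-1} + (n-2)·2^{n-3}` (the second term being `0` when `n = 2`, as is
automatic with truncated subtraction). -/
theorem card_avoid_1243_2143_231 (n : ℕ) :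
    (3 ≤ n →
      Nat.card {π : Equiv.Perm (Fin n) //
          Avoids π pat1243 ∧ Avoids π pat2143 ∧ Avoids π pat231}
        = (n + 2) * 2 ^ (n - 3)) ∧
    (2 ≤ n →
      Nat.card {π : Equiv.Perm (Fin n) //
          Avoids π pat1243 ∧ Avoids π pat2143 ∧ Avoids π pat231}
        = 2 ^ (n - 1) + (n - 2) * 2 ^ (n - 3)) := by
  constructor
  · intro h3
    obtain ⟨k, rfl⟩ := Nat.exists_eq_add_of_le h3
    rw [AvoidAux.card_perm_eq]
    have hc : 3 + k = k + 3 := by omega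
    rw [hc, AvoidAux.card_setA_formula]
    have e1 : k + 3 + 2 = k + 5 := by omega
    have e2 : k + 3 - 3 = k := by omega
    rw [e1, e2]
  · intro h2
    rcases Nat.lt_or_ge n 3 with h | h
    · have hn : n = 2 := by omega
      subst hn
      rw [AvoidAux.card_perm_eq, AvoidAux.card_setA_two]
      norm_num
    · obtain ⟨k, rfl⟩ := Nat.exists_eq_add_of_le h
      rw [AvoidAux.card_perm_eq]
      have hc : 3 + k = k + 3 := by omega
      rw [hc, AvoidAux.card_setA_formula]
      have e1 : k + 3 - 1 = k + 2 := by omega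
      have e2 : k + 3 - 2 = k + 1 := by omega
      have e3 : k + 3 - 3 = k := by omega
      rw [e1, e2, e3, pow_add]
      ring
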